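/- Let φ : g → h be a quasi-isomorphism of DG Lie algebras over a field K of characteristic 0, and let (R, m) be an artinian local K-algebra with R/m = K. Let ω ∈ MC(m ⊗ g) and χ := φ(ω). Then φ : (m ⊗ g, d_ω) → (m ⊗ h, d_χ) is a quasi-isomorphism of complexes. -/

import Mathlib

open scoped TensorProduct

/-- A (ℤ-graded) DG Lie algebra over a field `K` of characteristic `0`. -/
structure DGLA (K : Type) [Field K] : Type 1 where
  L : Type
  [acg : AddCommGroup L]
  [mod : Module K L]
  grading : ℤ → Submodule K L
  isInternal : DirectSum.IsInternal grading
  d : L →ₗ[K] L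
  d_sq : ∀ x, d (d x) = 0
  d_deg : ∀ (i : ℤ), ∀ x ∈ grading i, d x ∈ grading (i + 1)
  bracket : L →ₗ[K] L →ₗ[K] L
  bracket_deg : ∀ (i j : ℤ), ∀ x ∈ grading i, ∀ y ∈ grading j, bracket x y ∈ grading (i + j)
  bracket_antisymm : ∀ (i j : ℤ), ∀ x ∈ grading i, ∀ y ∈ grading j,
    bracket x y = -(((Int.negOnePow (i * j) : ℤˣ) : ℤ) • bracket y x)
  bracket_jacobi : ∀ (i j k : ℤ), ∀ x ∈ grading i, ∀ y ∈ grading j, ∀ z ∈ grading k,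
    ((Int.negOnePow (i * k) : ℤˣ) : ℤ) • bracket x (bracket y z)
      + ((Int.negOnePow (j * i) : ℤˣ) : ℤ) • bracket y (bracket z x)
      + ((Int.negOnePow (k * j) : ℤˣ) : ℤ) • bracket z (bracket x y) = 0
  d_leibniz : ∀ (i : ℤ), ∀ x ∈ grading i, ∀ y : L,
    d (bracket x y) = bracket (d x) y + ((Int.negOnePow i : ℤˣ) : ℤ) • bracket x (d y)

attribute [instance] DGLA.acg DGLA.mod

namespace DGLA

variable {K : Type} [Field K] (g : DGLA K)

/-- The Maurer–Cartan condition: `ω ∈ g¹` and `d ω + ½[ω,ω] = 0`. -/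
def IsMC (ω : g.L) : Prop :=
  ω ∈ g.grading 1 ∧ g.d ω + (2 : K)⁻¹ • g.bracket ω ω = 0

/-- The twisted differential `d_ω = d + ad(ω)`. -/
def dMC (ω : g.L) : g.L →ₗ[K] g.L := g.d + g.bracket ω

/-- Lower central series of the underlying graded Lie algebra. -/
def lcs : ℕ → Submodule K g.L
  | 0 => ⊤
  | n + 1 => Submodule.span K {z | ∃ x y, y ∈ lcs n ∧ z = g.bracket x y}

/-- Nilpotency of a DG Lie algebra. -/
def IsNilpotent : Prop := ∃ n, g.lcs n = ⊥

end DGLA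

/-- Truncated exponential `∑_{i<n} fⁱ/i!` of an endomorphism. -/
noncomputable def expN {K : Type} [Field K] {M : Type} [AddCommGroup M] [Module K M]
    (f : M →ₗ[K] M) (n : ℕ) : M →ₗ[K] M :=
  ∑ i ∈ Finset.range n, ((i.factorial : K)⁻¹) • f ^ i

/-- Truncated version of `(exp(f) - 1)/f`, namely `∑_{i<n} fⁱ/(i+1)!`. -/
noncomputable def expN' {K : Type} [Field K] {M : Type} [AddCommGroup M] [Module K M]
    (f : M →ₗ[K] M) (n : ℕ) : M →ₗ[K] M :=
  ∑ i ∈ Finset.range n, (((i + 1).factorial : K)⁻¹) • f ^ i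

/-- The gauge action `Af(exp γ)(ω) = exp(ad γ)(ω) + ((1 - exp(ad γ))/ad γ)(d γ)`,
with exponentials truncated at `n`. -/
noncomputable def DGLA.Af {K : Type} [Field K] (g : DGLA K) (γ : g.L) (n : ℕ) (ω : g.L) :
    g.L :=
  expN (g.bracket γ) n ω - expN' (g.bracket γ) n (g.d γ)

namespace DGLA

variable {K : Type} [Field K]

/-- The differential extended to `R ⊗ g`. -/
noncomputable def extD (g : DGLA K) (R : Type) [CommRing R] [Algebra K R] :
    R ⊗[K] g.L →ₗ[K] R ⊗[K] g.L :=
  LinearMap.lTensor R g.d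

/-- The Lie bracket extended `R`-bilinearly to `R ⊗ g`:
`[a ⊗ x, b ⊗ y] = (ab) ⊗ [x, y]`. -/
noncomputable def extBr (g : DGLA K) (R : Type) [CommRing R] [Algebra K R] :
    R ⊗[K] g.L →ₗ[K] R ⊗[K] g.L →ₗ[K] R ⊗[K] g.L :=
  TensorProduct.curry
    ((TensorProduct.map (LinearMap.mul' K R) (TensorProduct.lift g.bracket)).comp
      (TensorProduct.tensorTensorTensorComm K R g.L R g.L).toLinearMap)

/-- The curvature `cur(ω) = d(ω) + ½[ω,ω]` on `R ⊗ g`. -/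
noncomputable def curR (g : DGLA K) (R : Type) [CommRing R] [Algebra K R]
    (ω : R ⊗[K] g.L) : R ⊗[K] g.L :=
  g.extD R ω + algebraMap K R ((2 : K)⁻¹) • g.extBr R ω ω

/-- The submodule `I ⊗ gⁱ` of `R ⊗ g`, for an ideal `I ⊆ R`. -/
noncomputable def part (g : DGLA K) (R : Type) [CommRing R] [Algebra K R]
    (I : Ideal R) (i : ℤ) : Submodule R (R ⊗[K] g.L) :=
  I • ((g.grading i).baseChange R)

/-- A homomorphism of DG Lie algebras. -/
structure Hom (g h : DGLA K) where
  f : g.L →ₗ[K] h.L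
  comm_d : ∀ x, f (g.d x) = h.d (f x)
  comm_br : ∀ x y, f (g.bracket x y) = h.bracket (f x) (f y)
  map_grading : ∀ (i : ℤ), ∀ x ∈ g.grading i, f x ∈ h.grading i

/-- `φ : g → h` is a quasi-isomorphism: it induces isomorphisms on all cohomologies. -/
def Hom.IsQuasiIso {g h : DGLA K} (φ : Hom g h) : Prop :=
  ∀ i : ℤ,
    (∀ y ∈ h.grading i, h.d y = 0 → ∃ x ∈ g.grading i, g.d x = 0 ∧
      ∃ z ∈ h.grading (i - 1), φ.f x - y = h.d z) ∧
    (∀ x ∈ g.grading i, g.d x = 0 → (∃ z ∈ h.grading (i - 1), φ.f x = h.d z) →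
      ∃ w ∈ g.grading (i - 1), x = g.d w)

end DGLA

section Aux

open TensorProduct

variable {K : Type} [Field K] {g h : DGLA K} {R : Type} [CommRing R] [Algebra K R]

lemma extD_tmul (g : DGLA K) (a : R) (x : g.L) :
    g.extD R (a ⊗ₜ[K] x) = a ⊗ₜ[K] g.d x := rfl

lemma extBr_tmul (g : DGLA K) (a b : R) (x y : g.L) :
    g.extBr R (a ⊗ₜ[K] x) (b ⊗ₜ[K] y) = (a * b) ⊗ₜ[K] g.bracket x y := by
  simp [DGLA.extBr, LinearMap.mul'_apply]

lemma tmul_mem_part (g : DGLA K) {I : Ideal R} {i : ℤ} {a : R} (ha : a ∈ I)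
    {v : g.L} (hv : v ∈ g.grading i) : a ⊗ₜ[K] v ∈ g.part R I i := by
  have : a ⊗ₜ[K] v = a • ((1 : R) ⊗ₜ[K] v) := by
    rw [smul_tmul', smul_eq_mul, mul_one]
  rw [this]
  exact Submodule.smul_mem_smul ha (Submodule.tmul_mem_baseChange_of_mem 1 hv)

lemma part_induction (g : DGLA K) {I : Ideal R} {i : ℤ} {P : R ⊗[K] g.L → Prop}
    (h0 : P 0) (hadd : ∀ x y, P x → P y → P (x + y))
    (htmul : ∀ a ∈ I, ∀ v ∈ g.grading i, P (a ⊗ₜ[K] v))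
    {x : R ⊗[K] g.L} (hx : x ∈ g.part R I i) : P x := by
  refine Submodule.smul_induction_on hx (fun a ha n hn => ?_) (fun x y hx hy => hadd x y hx hy)
  revert a ha
  refine Submodule.span_induction (p := fun n _ => ∀ a ∈ I, P (a • n)) ?_ ?_ ?_ ?_
    (by rwa [Submodule.baseChange_eq_span] at hn)
  · rintro _ ⟨v, hv, rfl⟩ a ha
    have : a • ((TensorProduct.mk K R g.L 1) v) = a ⊗ₜ[K] v := by
      simp [TensorProduct.mk_apply, smul_tmul', smul_eq_mul]
    rw [this]; exact htmul a ha v hv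
  · intro a _; simpa using h0
  · intro x y _ _ hx hy a ha
    rw [smul_add]; exact hadd _ _ (hx a ha) (hy a ha)
  · intro r x _ hx a ha
    rw [smul_smul]
    exact hx (a * r) (Ideal.mul_mem_right r I ha)

end Aux

section Aux2

open TensorProduct

variable {K : Type} [Field K] {R : Type} [CommRing R] [Algebra K R]

lemma part_mono (g : DGLA K) {I J : Ideal R} (hIJ : I ≤ J) (i : ℤ) :
    g.part R I i ≤ g.part R J i :=
  Submodule.smul_mono_left hIJ

lemma part_bot (g : DGLA K) (i : ℤ) : g.part R (⊥ : Ideal R) i = ⊥ := by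
  simp [DGLA.part]

lemma extD_mem_part (g : DGLA K) {I : Ideal R} {i : ℤ} {x : R ⊗[K] g.L}
    (hx : x ∈ g.part R I i) : g.extD R x ∈ g.part R I (i + 1) := by
  refine part_induction g (P := fun x => g.extD R x ∈ g.part R I (i + 1)) (by simp)
    (fun a b ha hb => ?_) (fun a ha v hv => ?_) hx
  · show g.extD R (a + b) ∈ _
    rw [map_add]; exact add_mem ha hb
  · show g.extD R (a ⊗ₜ[K] v) ∈ _
    rw [extD_tmul]
    exact tmul_mem_part g ha (g.d_deg i v hv)

lemma phiR_mem_part {g h : DGLA K} (φ : DGLA.Hom g h) {I : Ideal R} {i : ℤ} {x : R ⊗[K] g.L}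
    (hx : x ∈ g.part R I i) : LinearMap.lTensor R φ.f x ∈ h.part R I i := by
  refine part_induction g (P := fun x => LinearMap.lTensor R φ.f x ∈ h.part R I i) (by simp)
    (fun a b ha hb => ?_) (fun a ha v hv => ?_) hx
  · show LinearMap.lTensor R φ.f (a + b) ∈ _
    rw [map_add]; exact add_mem ha hb
  · show LinearMap.lTensor R φ.f (a ⊗ₜ[K] v) ∈ _
    rw [LinearMap.lTensor_tmul]
    exact tmul_mem_part h ha (φ.map_grading i v hv)

lemma extBr_mem_part (g : DGLA K) {I J : Ideal R} {i j : ℤ} {x y : R ⊗[K] g.L}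
    (hx : x ∈ g.part R I i) (hy : y ∈ g.part R J j) :
    g.extBr R x y ∈ g.part R (I * J) (i + j) := by
  refine part_induction g (P := fun x => g.extBr R x y ∈ g.part R (I * J) (i + j))
    (by simp) (fun a b ha hb => ?_) (fun a ha v hv => ?_) hx
  · show g.extBr R (a + b) y ∈ _
    rw [map_add, LinearMap.add_apply]; exact add_mem ha hb
  · refine part_induction g (P := fun y => g.extBr R (a ⊗ₜ[K] v) y ∈ g.part R (I * J) (i + j))
      (by simp) (fun c e hc he => ?_) (fun b hb w hw => ?_) hy
    · show g.extBr R _ (c + e) ∈ _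
      rw [map_add]; exact add_mem hc he
    · show g.extBr R (a ⊗ₜ[K] v) (b ⊗ₜ[K] w) ∈ _
      rw [extBr_tmul]
      exact tmul_mem_part g (Ideal.mul_mem_mul ha hb) (g.bracket_deg i j v hv w hw)

/-- Graded Jacobi specialization for two degree-one elements. -/
lemma bracket_jacobi1 (g : DGLA K) {x x' y : g.L} (hx : x ∈ g.grading 1)
    (hx' : x' ∈ g.grading 1) {k : ℤ} (hy : y ∈ g.grading k) :
    g.bracket x (g.bracket x' y) + g.bracket x' (g.bracket x y)
      = g.bracket (g.bracket x x') y := by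
  have hj := g.bracket_jacobi 1 1 k x hx x' hx' y hy
  have ha1 : g.bracket y x = -(((Int.negOnePow (k * 1) : ℤˣ) : ℤ) • g.bracket x y) :=
    g.bracket_antisymm k 1 y hy x hx
  have hxx' : g.bracket x x' ∈ g.grading 2 := by
    have := g.bracket_deg 1 1 x hx x' hx'; norm_num at this; exact this
  have ha2 : g.bracket y (g.bracket x x')
      = -(((Int.negOnePow (k * 2) : ℤˣ) : ℤ) • g.bracket (g.bracket x x') y) :=
    g.bracket_antisymm k 2 y hy _ hxx'
  rw [ha1, ha2] at hj
  have h2 : Int.negOnePow (k * 2) = 1 := Int.negOnePow_even _ ⟨k, by ring⟩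
  simp only [one_mul, mul_one, Int.negOnePow_one, h2] at hj
  rcases Int.even_or_odd k with hk | hk
  · have he : Int.negOnePow k = 1 := Int.negOnePow_even _ hk
    rw [he] at hj
    simp only [Units.val_one, one_smul, Units.val_neg, neg_smul, map_neg, map_smul,
      smul_neg, neg_neg] at hj
    linear_combination (norm := abel) hj
  · have he : Int.negOnePow k = -1 := Int.negOnePow_odd _ hk
    rw [he] at hj
    simp only [Units.val_one, one_smul, Units.val_neg, neg_smul, map_neg, map_smul,
      smul_neg, neg_neg] at hj
    linear_combination (norm := abel) -hj

lemma d_leibniz1 (g : DGLA K) {x : g.L} (hx : x ∈ g.grading 1) (y : g.L) :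
    g.d (g.bracket x y) = g.bracket (g.d x) y - g.bracket x (g.d y) := by
  have := g.d_leibniz 1 x hx y
  rw [Int.negOnePow_one] at this
  simpa [sub_eq_add_neg] using this

end Aux2

section Aux3

open TensorProduct

variable {K : Type} [Field K] {R : Type} [CommRing R] [Algebra K R]

lemma extD_extD (g : DGLA K) (v : R ⊗[K] g.L) : g.extD R (g.extD R v) = 0 := by
  have : g.extD R ∘ₗ g.extD R = LinearMap.lTensor R (g.d ∘ₗ g.d) := by
    rw [DGLA.extD, ← LinearMap.lTensor_comp]
  have h2 : g.d ∘ₗ g.d = 0 := by ext x; exact g.d_sq x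
  have h3 := congrArg (fun f => f v) this
  simp only [LinearMap.comp_apply, h2, LinearMap.lTensor_zero, LinearMap.zero_apply] at h3
  exact h3

lemma extBr_smul_left (g : DGLA K) (r : R) (u v : R ⊗[K] g.L) :
    g.extBr R (r • u) v = r • g.extBr R u v := by
  induction u using TensorProduct.induction_on with
  | zero => simp
  | add a b ha hb => rw [smul_add, map_add, map_add, LinearMap.add_apply,
      LinearMap.add_apply, ha, hb, smul_add]
  | tmul a x =>
    induction v using TensorProduct.induction_on with
    | zero => simp
    | add c e hc he => rw [map_add, map_add, hc, he, smul_add]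
    | tmul b y =>
      rw [smul_tmul', extBr_tmul, extBr_tmul, smul_tmul', smul_eq_mul, smul_eq_mul, mul_assoc]

lemma extBr_smul_right (g : DGLA K) (r : R) (u v : R ⊗[K] g.L) :
    g.extBr R u (r • v) = r • g.extBr R u v := by
  induction u using TensorProduct.induction_on with
  | zero => simp
  | add a b ha hb => rw [map_add, LinearMap.add_apply, LinearMap.add_apply, ha, hb, smul_add]
  | tmul a x =>
    induction v using TensorProduct.induction_on with
    | zero => simp
    | add c e hc he => rw [smul_add, map_add, map_add, hc, he, smul_add]
    | tmul b y =>
      rw [smul_tmul', extBr_tmul, extBr_tmul, smul_tmul', smul_eq_mul, smul_eq_mul,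
        mul_left_comm]

lemma leibniz_ext (g : DGLA K) {ω : R ⊗[K] g.L} (hω : ω ∈ g.part R (⊤ : Ideal R) 1)
    (v : R ⊗[K] g.L) :
    g.extD R (g.extBr R ω v)
      = g.extBr R (g.extD R ω) v - g.extBr R ω (g.extD R v) := by
  refine part_induction g (P := fun ω => ∀ v, g.extD R (g.extBr R ω v)
      = g.extBr R (g.extD R ω) v - g.extBr R ω (g.extD R v)) ?_ ?_ ?_ hω v
  · intro v; simp
  · intro a b ha hb v
    simp only [map_add, LinearMap.add_apply] at *
    rw [ha v, hb v]; abel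
  · intro a _ x hx v
    induction v using TensorProduct.induction_on with
    | zero => simp
    | add c e hc he =>
      simp only [map_add] at *
      rw [hc, he]; abel
    | tmul b y =>
      rw [extBr_tmul, extD_tmul, extD_tmul, extD_tmul, extBr_tmul, extBr_tmul,
        d_leibniz1 g hx y, tmul_sub]

lemma jacobi_ext (g : DGLA K) {α β : R ⊗[K] g.L} (hα : α ∈ g.part R (⊤ : Ideal R) 1)
    (hβ : β ∈ g.part R (⊤ : Ideal R) 1) (v : R ⊗[K] g.L) :
    g.extBr R α (g.extBr R β v) + g.extBr R β (g.extBr R α v)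
      = g.extBr R (g.extBr R α β) v := by
  refine part_induction g (P := fun α => ∀ β ∈ g.part R (⊤ : Ideal R) 1, ∀ v,
      g.extBr R α (g.extBr R β v) + g.extBr R β (g.extBr R α v)
        = g.extBr R (g.extBr R α β) v) ?_ ?_ ?_ hα β hβ v
  · intro β _ v; simp
  · intro a b ha hb β hβ v
    simp only [map_add, LinearMap.add_apply]
    rw [← ha β hβ v, ← hb β hβ v]; abel
  · intro a _ x hx β hβ v
    refine part_induction g (P := fun β => ∀ v,
        g.extBr R (a ⊗ₜ[K] x) (g.extBr R β v) + g.extBr R β (g.extBr R (a ⊗ₜ[K] x) v)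
          = g.extBr R (g.extBr R (a ⊗ₜ[K] x) β) v) ?_ ?_ ?_ hβ v
    · intro v; simp
    · intro c e hc he v
      simp only [map_add, LinearMap.add_apply]
      linear_combination (norm := abel) hc v + he v
    · intro b _ x' hx' v
      induction v using TensorProduct.induction_on with
      | zero => simp
      | add c e hc he =>
        simp only [map_add]
        linear_combination (norm := abel) hc + he
      | tmul cc y =>
        -- reduce to graded y
        have hy : y ∈ ⨆ k, g.grading k := by
          rw [g.isInternal.submodule_iSup_eq_top]; trivial
        refine Submodule.iSup_induction (motive := fun y =>
            g.extBr R (a ⊗ₜ[K] x) (g.extBr R (b ⊗ₜ[K] x') (cc ⊗ₜ[K] y))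
              + g.extBr R (b ⊗ₜ[K] x') (g.extBr R (a ⊗ₜ[K] x) (cc ⊗ₜ[K] y))
              = g.extBr R (g.extBr R (a ⊗ₜ[K] x) (b ⊗ₜ[K] x')) (cc ⊗ₜ[K] y))
          _ hy ?_ ?_ ?_
        · intro k y hy
          rw [extBr_tmul, extBr_tmul, extBr_tmul, extBr_tmul, extBr_tmul, extBr_tmul,
            show a * (b * cc) = a * b * cc by ring, show b * (a * cc) = a * b * cc by ring,
            ← tmul_add, bracket_jacobi1 g hx hx' hy]
        · simp
        · intro y z hy hz
          simp only [tmul_add, map_add]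
          linear_combination (norm := abel) hy + hz
  end Aux3

section Aux4

open TensorProduct

variable {K : Type} [Field K] {R : Type} [CommRing R] [Algebra K R]

lemma dMC_dMC (g : DGLA K) [CharZero K] {I : Ideal R} {ω : R ⊗[K] g.L}
    (hω : ω ∈ g.part R I 1) (hmc : g.curR R ω = 0) (v : R ⊗[K] g.L) :
    g.extD R (g.extD R v + g.extBr R ω v)
      + g.extBr R ω (g.extD R v + g.extBr R ω v) = 0 := by
  have hωt : ω ∈ g.part R (⊤ : Ideal R) 1 := part_mono g le_top 1 hω
  have hd : g.extD R ω = -(algebraMap K R ((2 : K)⁻¹) • g.extBr R ω ω) := by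
    have := hmc
    rw [DGLA.curR] at this
    linear_combination (norm := abel) this
  have hjac := jacobi_ext g hωt hωt v
  have hc : algebraMap K R ((2 : K)⁻¹) • g.extBr R (g.extBr R ω ω) v
      = g.extBr R ω (g.extBr R ω v) := by
    rw [← hjac]
    set u := g.extBr R ω (g.extBr R ω v)
    rw [smul_add, ← add_smul, ← map_add]
    have : (2 : K)⁻¹ + (2 : K)⁻¹ = 1 := by
      rw [← two_mul, mul_inv_cancel₀ (two_ne_zero)]
    rw [this, map_one, one_smul]
  rw [map_add, extD_extD, leibniz_ext g hωt v, hd, map_neg, LinearMap.neg_apply,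
    extBr_smul_left, hc]
  simp only [map_add]
  abel

lemma phiR_extD {g h : DGLA K} (φ : DGLA.Hom g h) (v : R ⊗[K] g.L) :
    LinearMap.lTensor R φ.f (g.extD R v) = h.extD R (LinearMap.lTensor R φ.f v) := by
  induction v using TensorProduct.induction_on with
  | zero => simp
  | add a b ha hb => simp only [map_add, ha, hb]
  | tmul a x =>
    rw [extD_tmul, LinearMap.lTensor_tmul, LinearMap.lTensor_tmul, extD_tmul, φ.comm_d]

lemma phiR_extBr {g h : DGLA K} (φ : DGLA.Hom g h) (u v : R ⊗[K] g.L) :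
    LinearMap.lTensor R φ.f (g.extBr R u v)
      = h.extBr R (LinearMap.lTensor R φ.f u) (LinearMap.lTensor R φ.f v) := by
  induction u using TensorProduct.induction_on with
  | zero => simp
  | add a b ha hb => simp only [map_add, LinearMap.add_apply, ha, hb]
  | tmul a x =>
    induction v using TensorProduct.induction_on with
    | zero => simp
    | add c e hc he => simp only [map_add, hc, he]
    | tmul b y =>
      rw [extBr_tmul, LinearMap.lTensor_tmul, LinearMap.lTensor_tmul, LinearMap.lTensor_tmul,
        extBr_tmul, φ.comm_br]

lemma phiR_smul {g h : DGLA K} (φ : DGLA.Hom g h) (r : R) (v : R ⊗[K] g.L) :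
    LinearMap.lTensor R φ.f (r • v) = r • LinearMap.lTensor R φ.f v := by
  induction v using TensorProduct.induction_on with
  | zero => simp
  | add a b ha hb => rw [smul_add, map_add, map_add, ha, hb, smul_add]
  | tmul a x => rw [smul_tmul', LinearMap.lTensor_tmul, LinearMap.lTensor_tmul, smul_tmul']

lemma curR_phi {g h : DGLA K} (φ : DGLA.Hom g h) (ω : R ⊗[K] g.L) :
    h.curR R (LinearMap.lTensor R φ.f ω) = LinearMap.lTensor R φ.f (g.curR R ω) := by
  rw [DGLA.curR, DGLA.curR, map_add, phiR_extD, phiR_smul, phiR_extBr]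

end Aux4

section Coords

open TensorProduct

variable {K : Type} [Field K] {R : Type} [CommRing R] [Algebra K R]

lemma exists_coords (I J : Ideal R) (hJI : J ≤ I) :
    ∃ (ι : Type) (e : ι → R) (f : ι → (R →ₗ[K] K)),
      (∀ j, e j ∈ I) ∧ (∀ j, ∀ a ∈ J, f j a = 0) ∧
      (∀ a ∈ I, ∃ s : Finset ι, (∀ j ∉ s, f j a = 0) ∧
        a - ∑ j ∈ s, f j a • e j ∈ J) := by
  classical
  set V : Submodule K R := Submodule.restrictScalars K I with hV
  set W' : Submodule K ↥V := (Submodule.restrictScalars K J).comap V.subtype with hW'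
  obtain ⟨C', hC'⟩ := Submodule.exists_isCompl W'
  obtain ⟨Vc, hVc⟩ := Submodule.exists_isCompl V
  set π₀ : R →ₗ[K] ↥V := Submodule.linearProjOfIsCompl V Vc hVc with hπ₀
  set π₁ : ↥V →ₗ[K] ↥C' := Submodule.linearProjOfIsCompl C' W' hC'.symm with hπ₁
  set b : Module.Basis (Module.Basis.ofVectorSpaceIndex K ↥C') K ↥C' := Module.Basis.ofVectorSpace K ↥C' with hb
  refine ⟨_, fun j => ((b j : ↥V) : R), fun j => (b.coord j) ∘ₗ π₁ ∘ₗ π₀, ?_, ?_, ?_⟩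
  · intro j; exact (b j : ↥V).2
  · intro j a haJ
    have haV : a ∈ V := hJI haJ
    have h0 : π₀ a = ⟨a, haV⟩ := Submodule.linearProjOfIsCompl_apply_left hVc ⟨a, haV⟩
    have h1 : π₁ ⟨a, haV⟩ = 0 :=
      Submodule.linearProjOfIsCompl_apply_right' hC'.symm (x := ⟨a, haV⟩) (by simpa [hW'] using haJ)
    simp [LinearMap.comp_apply, h0, h1]
  · intro a ha
    have h0 : π₀ a = ⟨a, ha⟩ := Submodule.linearProjOfIsCompl_apply_left hVc ⟨a, ha⟩
    set c : ↥C' := π₁ ⟨a, ha⟩ with hc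
    refine ⟨(b.repr c).support, ?_, ?_⟩
    · intro j hj
      simp only [LinearMap.comp_apply, h0, ← hc, Module.Basis.coord_apply]
      exact Finsupp.notMem_support_iff.mp hj
    · have hsum : ∑ j ∈ (b.repr c).support, ((b.coord j) ∘ₗ π₁ ∘ₗ π₀) a • ((b j : ↥V) : R)
          = ((c : ↥V) : R) := by
        have : ∀ j, ((b.coord j) ∘ₗ π₁ ∘ₗ π₀) a = b.repr c j := by
          intro j; simp [LinearMap.comp_apply, h0, ← hc, Module.Basis.coord_apply]
        rw [Finset.sum_congr rfl (fun j _ => by rw [this j])]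
        have hrepr : ∑ j ∈ (b.repr c).support, b.repr c j • b j = c := by
          conv_rhs => rw [← b.linearCombination_repr c]
          rw [Finsupp.linearCombination_apply, Finsupp.sum]
        calc ∑ j ∈ (b.repr c).support, b.repr c j • ((b j : ↥V) : R)
            = ((((∑ j ∈ (b.repr c).support, b.repr c j • b j : ↥C') : ↥V)) : R) := by
              push_cast
              rfl
          _ = ((c : ↥V) : R) := by rw [hrepr]
      rw [hsum]
      have hker : π₁ (⟨a, ha⟩ - (c : ↥V)) = 0 := by
        rw [map_sub, ← hc]
        have : π₁ (c : ↥V) = c := Submodule.linearProjOfIsCompl_apply_left hC'.symm c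
        rw [this, sub_self]
      have hmem : (⟨a, ha⟩ - (c : ↥V)) ∈ W' :=
        (Submodule.linearProjOfIsCompl_apply_eq_zero_iff hC'.symm).mp hker
      simpa [hW'] using hmem

/-- Coordinate map `R ⊗ g → g` induced by a functional `R → K`. -/
noncomputable def coordMap (g : DGLA K) (f : R →ₗ[K] K) : R ⊗[K] g.L →ₗ[K] g.L :=
  (TensorProduct.lid K g.L).toLinearMap ∘ₗ LinearMap.rTensor g.L f

lemma coordMap_tmul (g : DGLA K) (f : R →ₗ[K] K) (a : R) (v : g.L) :
    coordMap g f (a ⊗ₜ[K] v) = f a • v := by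
  simp [coordMap]

lemma coordMap_extD (g : DGLA K) (f : R →ₗ[K] K) (y : R ⊗[K] g.L) :
    coordMap g f (g.extD R y) = g.d (coordMap g f y) := by
  induction y using TensorProduct.induction_on with
  | zero => simp
  | add a b ha hb => simp only [map_add, ha, hb]
  | tmul a v => rw [extD_tmul, coordMap_tmul, coordMap_tmul, map_smul]

lemma coordMap_phiR {g h : DGLA K} (φ : DGLA.Hom g h) (f : R →ₗ[K] K) (y : R ⊗[K] g.L) :
    coordMap h f (LinearMap.lTensor R φ.f y) = φ.f (coordMap g f y) := by
  induction y using TensorProduct.induction_on with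
  | zero => simp
  | add a b ha hb => simp only [map_add, ha, hb]
  | tmul a v => rw [LinearMap.lTensor_tmul, coordMap_tmul, coordMap_tmul, map_smul]

lemma coordMap_mem_grading (g : DGLA K) (f : R →ₗ[K] K) {I : Ideal R} {i : ℤ}
    {y : R ⊗[K] g.L} (hy : y ∈ g.part R I i) : coordMap g f y ∈ g.grading i := by
  refine part_induction g (P := fun y => coordMap g f y ∈ g.grading i) (by simp)
    (fun a b ha hb => ?_) (fun a _ v hv => ?_) hy
  · show coordMap g f (a + b) ∈ _; rw [map_add]; exact add_mem ha hb
  · show coordMap g f (a ⊗ₜ[K] v) ∈ _; rw [coordMap_tmul]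
    exact Submodule.smul_mem _ _ hv

lemma coordMap_eq_zero (g : DGLA K) {J : Ideal R} (f : R →ₗ[K] K)
    (hf : ∀ a ∈ J, f a = 0) {i : ℤ} {y : R ⊗[K] g.L} (hy : y ∈ g.part R J i) :
    coordMap g f y = 0 := by
  refine part_induction g (P := fun y => coordMap g f y = 0) (by simp)
    (fun a b ha hb => ?_) (fun a ha v hv => ?_) hy
  · show coordMap g f (a + b) = 0; rw [map_add, ha, hb, add_zero]
  · show coordMap g f (a ⊗ₜ[K] v) = 0; rw [coordMap_tmul, hf a ha, zero_smul]

lemma part_decomp (g : DGLA K) {I J : Ideal R} {i : ℤ} {ι : Type}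
    (e : ι → R) (f : ι → (R →ₗ[K] K))
    (hdec : ∀ a ∈ I, ∃ s : Finset ι, (∀ j ∉ s, f j a = 0) ∧
      a - ∑ j ∈ s, f j a • e j ∈ J)
    {y : R ⊗[K] g.L} (hy : y ∈ g.part R I i) :
    ∃ s : Finset ι, (∀ j ∉ s, coordMap g (f j) y = 0) ∧
      y - ∑ j ∈ s, (e j) ⊗ₜ[K] (coordMap g (f j) y) ∈ g.part R J i := by
  classical
  refine part_induction g (P := fun y => ∃ s : Finset ι,
      (∀ j ∉ s, coordMap g (f j) y = 0) ∧
      y - ∑ j ∈ s, (e j) ⊗ₜ[K] (coordMap g (f j) y) ∈ g.part R J i) ?_ ?_ ?_ hy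
  · exact ⟨∅, fun j _ => by simp, by simp⟩
  · rintro a b ⟨s₁, hv₁, hm₁⟩ ⟨s₂, hv₂, hm₂⟩
    refine ⟨s₁ ∪ s₂, fun j hj => ?_, ?_⟩
    · rw [map_add, hv₁ j (fun hc => hj (Finset.mem_union_left _ hc)),
        hv₂ j (fun hc => hj (Finset.mem_union_right _ hc)), add_zero]
    · have e₁ : ∑ j ∈ s₁ ∪ s₂, (e j) ⊗ₜ[K] (coordMap g (f j) a)
          = ∑ j ∈ s₁, (e j) ⊗ₜ[K] (coordMap g (f j) a) :=
        (Finset.sum_subset Finset.subset_union_left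
          (fun j _ hj => by rw [hv₁ j hj, tmul_zero])).symm
      have e₂ : ∑ j ∈ s₁ ∪ s₂, (e j) ⊗ₜ[K] (coordMap g (f j) b)
          = ∑ j ∈ s₂, (e j) ⊗ₜ[K] (coordMap g (f j) b) :=
        (Finset.sum_subset Finset.subset_union_right
          (fun j _ hj => by rw [hv₂ j hj, tmul_zero])).symm
      have : a + b - ∑ j ∈ s₁ ∪ s₂, (e j) ⊗ₜ[K] (coordMap g (f j) (a + b))
          = (a - ∑ j ∈ s₁, (e j) ⊗ₜ[K] (coordMap g (f j) a))
            + (b - ∑ j ∈ s₂, (e j) ⊗ₜ[K] (coordMap g (f j) b)) := by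
        have : ∀ j, coordMap g (f j) (a + b)
            = coordMap g (f j) a + coordMap g (f j) b := fun j => map_add _ _ _
        simp only [this, tmul_add, Finset.sum_add_distrib, e₁, e₂]
        abel
      rw [this]
      exact add_mem hm₁ hm₂
  · rintro a ha v hv
    obtain ⟨s, hvan, hmem⟩ := hdec a ha
    refine ⟨s, fun j hj => by rw [coordMap_tmul, hvan j hj, zero_smul], ?_⟩
    have : ∑ j ∈ s, (e j) ⊗ₜ[K] (coordMap g (f j) (a ⊗ₜ[K] v))
        = (∑ j ∈ s, f j a • e j) ⊗ₜ[K] v := by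
      rw [sum_tmul]
      refine Finset.sum_congr rfl (fun j _ => ?_)
      rw [coordMap_tmul, tmul_smul, smul_tmul']
    rw [this, ← sub_tmul]
    exact tmul_mem_part g hmem hv

end Coords

section L1

open TensorProduct

variable {K : Type} [Field K] {R : Type} [CommRing R] [Algebra K R]

lemma qis_surj_part {g h : DGLA K} (φ : DGLA.Hom g h) (hφ : φ.IsQuasiIso)
    {I J : Ideal R} (hJI : J ≤ I) (i : ℤ) {y : R ⊗[K] h.L}
    (hy : y ∈ h.part R I i) (hdy : h.extD R y ∈ h.part R J (i + 1)) :
    ∃ x ∈ g.part R I i, g.extD R x = 0 ∧ ∃ z ∈ h.part R I (i - 1),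
      LinearMap.lTensor R φ.f x - y - h.extD R z ∈ h.part R J i := by
  classical
  obtain ⟨ι, e, f, he, hfJ, hdec⟩ := exists_coords (K := K) I J hJI
  have hyj : ∀ j, coordMap h (f j) y ∈ h.grading i := fun j => coordMap_mem_grading h (f j) hy
  have hdyj : ∀ j, h.d (coordMap h (f j) y) = 0 := fun j => by
    rw [← coordMap_extD]; exact coordMap_eq_zero h (f j) (hfJ j) hdy
  choose x hxg hdx z hzg hxz using fun j => (hφ i).1 (coordMap h (f j) y) (hyj j) (hdyj j)
  obtain ⟨s, hvan, hmem⟩ := part_decomp h e f hdec hy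
  refine ⟨∑ j ∈ s, (e j) ⊗ₜ[K] x j, ?_, ?_, ∑ j ∈ s, (e j) ⊗ₜ[K] z j, ?_, ?_⟩
  · exact Submodule.sum_mem _ (fun j _ => tmul_mem_part g (he j) (hxg j))
  · rw [map_sum]
    refine Finset.sum_eq_zero (fun j _ => ?_)
    rw [extD_tmul, hdx j, tmul_zero]
  · exact Submodule.sum_mem _ (fun j _ => tmul_mem_part h (he j) (hzg j))
  · have hkey : LinearMap.lTensor R φ.f (∑ j ∈ s, (e j) ⊗ₜ[K] x j) - y
        - h.extD R (∑ j ∈ s, (e j) ⊗ₜ[K] z j)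
        = -(y - ∑ j ∈ s, (e j) ⊗ₜ[K] (coordMap h (f j) y)) := by
      rw [map_sum, map_sum]
      rw [show (∑ j ∈ s, LinearMap.lTensor R φ.f ((e j) ⊗ₜ[K] x j))
          = ∑ j ∈ s, (e j) ⊗ₜ[K] (φ.f (x j)) from
        Finset.sum_congr rfl (fun j _ => by rw [LinearMap.lTensor_tmul])]
      rw [show (∑ j ∈ s, h.extD R ((e j) ⊗ₜ[K] z j))
          = ∑ j ∈ s, (e j) ⊗ₜ[K] (h.d (z j)) from
        Finset.sum_congr rfl (fun j _ => by rw [extD_tmul])]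
      have hsub : ∀ j ∈ s, (e j) ⊗ₜ[K] (φ.f (x j)) - (e j) ⊗ₜ[K] (h.d (z j))
          = (e j) ⊗ₜ[K] (coordMap h (f j) y) := by
        intro j _
        rw [← tmul_sub]
        congr 1
        rw [← hxz j]
        abel
      rw [show (∑ j ∈ s, (e j) ⊗ₜ[K] (coordMap h (f j) y))
          = ∑ j ∈ s, ((e j) ⊗ₜ[K] (φ.f (x j)) - (e j) ⊗ₜ[K] (h.d (z j))) from
        (Finset.sum_congr rfl hsub).symm]
      rw [Finset.sum_sub_distrib]
      abel
    rw [hkey]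
    exact neg_mem hmem

lemma qis_inj_part {g h : DGLA K} (φ : DGLA.Hom g h) (hφ : φ.IsQuasiIso)
    {I J : Ideal R} (hJI : J ≤ I) (i : ℤ) {u : R ⊗[K] g.L} {v : R ⊗[K] h.L}
    (hu : u ∈ g.part R I i) (hdu : g.extD R u ∈ g.part R J (i + 1))
    (hv : v ∈ h.part R I (i - 1))
    (hres : LinearMap.lTensor R φ.f u - h.extD R v ∈ h.part R J i) :
    ∃ ξ ∈ g.part R I (i - 1), u - g.extD R ξ ∈ g.part R J i := by
  classical
  obtain ⟨ι, e, f, he, hfJ, hdec⟩ := exists_coords (K := K) I J hJI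
  have huj : ∀ j, coordMap g (f j) u ∈ g.grading i := fun j => coordMap_mem_grading g (f j) hu
  have hduj : ∀ j, g.d (coordMap g (f j) u) = 0 := fun j => by
    rw [← coordMap_extD]; exact coordMap_eq_zero g (f j) (hfJ j) hdu
  have hexact : ∀ j, φ.f (coordMap g (f j) u) = h.d (coordMap h (f j) v) := by
    intro j
    have h0 := coordMap_eq_zero h (f j) (hfJ j) hres
    rw [map_sub, coordMap_phiR, coordMap_extD] at h0
    exact sub_eq_zero.mp h0
  choose w hwg hw using fun j => (hφ i).2 (coordMap g (f j) u) (huj j) (hduj j)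
    ⟨coordMap h (f j) v, coordMap_mem_grading h (f j) hv, hexact j⟩
  obtain ⟨s, hvan, hmem⟩ := part_decomp g e f hdec hu
  refine ⟨∑ j ∈ s, (e j) ⊗ₜ[K] w j,
    Submodule.sum_mem _ (fun j _ => tmul_mem_part g (he j) (hwg j)), ?_⟩
  have : g.extD R (∑ j ∈ s, (e j) ⊗ₜ[K] w j)
      = ∑ j ∈ s, (e j) ⊗ₜ[K] (coordMap g (f j) u) := by
    rw [map_sum]
    exact Finset.sum_congr rfl (fun j _ => by rw [extD_tmul, ← hw j])
  rw [this]
  exact hmem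

end L1

section Helpers

open TensorProduct

variable {K : Type} [Field K] {R : Type} [CommRing R] [Algebra K R]

lemma part_deg_congr (g : DGLA K) {I : Ideal R} {i j : ℤ} (hij : i = j) :
    g.part R I i = g.part R I j := by rw [hij]

lemma dMC_mem_part (g : DGLA K) {M I : Ideal R} {ω : R ⊗[K] g.L}
    (hω : ω ∈ g.part R M 1) {i : ℤ} {x : R ⊗[K] g.L} (hx : x ∈ g.part R I i) :
    g.extD R x + g.extBr R ω x ∈ g.part R I (i + 1) := by
  refine add_mem (extD_mem_part g hx) ?_
  have := extBr_mem_part g hω hx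
  rw [part_deg_congr g (show (1 : ℤ) + i = i + 1 by ring)] at this
  exact part_mono g Ideal.mul_le_right _ this

lemma extBr_small (g : DGLA K) {M : Ideal R} {ω : R ⊗[K] g.L}
    (hω : ω ∈ g.part R M 1) {l : ℕ} {i : ℤ} {x : R ⊗[K] g.L}
    (hx : x ∈ g.part R (M ^ l) i) :
    g.extBr R ω x ∈ g.part R (M ^ (l + 1)) (i + 1) := by
  have := extBr_mem_part g hω hx
  rw [part_deg_congr g (show (1 : ℤ) + i = i + 1 by ring)] at this
  have heq : M * M ^ l = M ^ (l + 1) := by rw [pow_succ, mul_comm]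
  rwa [heq] at this

lemma phiR_dMC {g h : DGLA K} (φ : DGLA.Hom g h) (ω v : R ⊗[K] g.L) :
    LinearMap.lTensor R φ.f (g.extD R v + g.extBr R ω v)
      = h.extD R (LinearMap.lTensor R φ.f v)
        + h.extBr R (LinearMap.lTensor R φ.f ω) (LinearMap.lTensor R φ.f v) := by
  rw [map_add, phiR_extD, phiR_extBr]

end Helpers

section Main

open TensorProduct

variable {K : Type} [Field K] [CharZero K] {R : Type} [CommRing R] [Algebra K R]

lemma mainAB {g h : DGLA K} (φ : DGLA.Hom g h) (hφ : φ.IsQuasiIso)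
    {M : Ideal R} {ω : R ⊗[K] g.L} (hω : ω ∈ g.part R M 1) (hmc : g.curR R ω = 0)
    (l : ℕ) :
    (∀ i : ℤ, ∀ y ∈ h.part R M i,
      h.extD R y + h.extBr R (LinearMap.lTensor R φ.f ω) y
        ∈ h.part R (M ^ (l + 1)) (i + 1) →
      ∃ x ∈ g.part R M i, ∃ z ∈ h.part R M (i - 1),
        g.extD R x + g.extBr R ω x ∈ g.part R (M ^ (l + 1)) (i + 1) ∧
        LinearMap.lTensor R φ.f x - y
          - (h.extD R z + h.extBr R (LinearMap.lTensor R φ.f ω) z)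
          ∈ h.part R (M ^ (l + 1)) i)
    ∧
    (∀ i : ℤ, ∀ x ∈ g.part R M i,
      g.extD R x + g.extBr R ω x ∈ g.part R (M ^ (l + 1)) (i + 1) →
      ∀ z ∈ h.part R M (i - 1),
        LinearMap.lTensor R φ.f x
          - (h.extD R z + h.extBr R (LinearMap.lTensor R φ.f ω) z)
          ∈ h.part R (M ^ (l + 1)) i →
        ∃ w ∈ g.part R M (i - 1),
          x - (g.extD R w + g.extBr R ω w) ∈ g.part R (M ^ (l + 1)) i) := by
  have hχ : LinearMap.lTensor R φ.f ω ∈ h.part R M 1 := phiR_mem_part φ hω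
  have hmcχ : h.curR R (LinearMap.lTensor R φ.f ω) = 0 := by
    rw [curR_phi, hmc, map_zero]
  induction l with
  | zero =>
    have hM1 : M ^ (0 + 1) = M := by norm_num
    constructor
    · intro i y hy _
      refine ⟨0, zero_mem _, 0, zero_mem _, ?_, ?_⟩
      · simp only [map_zero, add_zero]
        exact zero_mem _
      · simp only [map_zero, add_zero, sub_zero, zero_sub, hM1]
        exact neg_mem hy
    · intro i x hx _ z _ _
      refine ⟨0, zero_mem _, ?_⟩
      simp only [map_zero, add_zero, sub_zero, hM1]
      exact hx
  | succ l IH =>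
    have hJn : (M ^ (l + 1 + 1)) ≤ M ^ (l + 1) := Ideal.pow_le_pow_right (by omega)
    have hnM : M ^ (l + 1) ≤ M := Ideal.pow_le_self (Nat.succ_ne_zero l)
    constructor
    · -- Part A
      intro i y hy hdy
      obtain ⟨x₀, hx₀, z₀, hz₀, h1, h2⟩ := IH.1 i y hy (part_mono h hJn _ hdy)
      have hu0 := dMC_dMC g hω hmc x₀
      have hDu : g.extD R (g.extD R x₀ + g.extBr R ω x₀)
          ∈ g.part R (M ^ (l + 1 + 1)) ((i + 1) + 1) := by
        have heq : g.extD R (g.extD R x₀ + g.extBr R ω x₀)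
            = -(g.extBr R ω (g.extD R x₀ + g.extBr R ω x₀)) := by
          linear_combination (norm := abel) hu0
        rw [heq]
        exact neg_mem (extBr_small g hω h1)
      have e1 := phiR_dMC φ ω x₀
      have e3 := dMC_dMC h hχ hmcχ z₀
      have hkey : LinearMap.lTensor R φ.f (g.extD R x₀ + g.extBr R ω x₀)
          - h.extD R (LinearMap.lTensor R φ.f x₀ - y
              - (h.extD R z₀ + h.extBr R (LinearMap.lTensor R φ.f ω) z₀))
          = (h.extD R y + h.extBr R (LinearMap.lTensor R φ.f ω) y)
            + h.extBr R (LinearMap.lTensor R φ.f ω)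
                (LinearMap.lTensor R φ.f x₀ - y
                  - (h.extD R z₀ + h.extBr R (LinearMap.lTensor R φ.f ω) z₀)) := by
        simp only [map_add, map_sub] at e1 e3 ⊢
        linear_combination (norm := abel) e1 + e3
      have hres : LinearMap.lTensor R φ.f (g.extD R x₀ + g.extBr R ω x₀)
          - h.extD R (LinearMap.lTensor R φ.f x₀ - y
              - (h.extD R z₀ + h.extBr R (LinearMap.lTensor R φ.f ω) z₀))
          ∈ h.part R (M ^ (l + 1 + 1)) (i + 1) := by
        rw [hkey]
        exact add_mem hdy (extBr_small h hχ h2)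
      have hη' : LinearMap.lTensor R φ.f x₀ - y
          - (h.extD R z₀ + h.extBr R (LinearMap.lTensor R φ.f ω) z₀)
          ∈ h.part R (M ^ (l + 1)) ((i + 1) - 1) := by
        rw [part_deg_congr h (show (i + 1) - 1 = i by ring)]
        exact h2
      obtain ⟨ξ, hξ, hξ2⟩ := qis_inj_part φ hφ hJn (i + 1) h1 hDu hη' hres
      rw [part_deg_congr g (show (i + 1) - 1 = i by ring)] at hξ
      have hθ : (LinearMap.lTensor R φ.f x₀ - y
            - (h.extD R z₀ + h.extBr R (LinearMap.lTensor R φ.f ω) z₀))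
          - LinearMap.lTensor R φ.f ξ ∈ h.part R (M ^ (l + 1)) i :=
        sub_mem h2 (phiR_mem_part φ hξ)
      have hDθ : h.extD R ((LinearMap.lTensor R φ.f x₀ - y
            - (h.extD R z₀ + h.extBr R (LinearMap.lTensor R φ.f ω) z₀))
          - LinearMap.lTensor R φ.f ξ) ∈ h.part R (M ^ (l + 1 + 1)) (i + 1) := by
        have e5 := phiR_extD φ ξ
        have heq : h.extD R ((LinearMap.lTensor R φ.f x₀ - y
              - (h.extD R z₀ + h.extBr R (LinearMap.lTensor R φ.f ω) z₀))
              - LinearMap.lTensor R φ.f ξ)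
            = -(LinearMap.lTensor R φ.f (g.extD R x₀ + g.extBr R ω x₀)
                - h.extD R (LinearMap.lTensor R φ.f x₀ - y
                  - (h.extD R z₀ + h.extBr R (LinearMap.lTensor R φ.f ω) z₀)))
              + LinearMap.lTensor R φ.f
                  ((g.extD R x₀ + g.extBr R ω x₀) - g.extD R ξ) := by
          simp only [map_add, map_sub] at e5 ⊢
          linear_combination (norm := abel) e5
        rw [heq]
        exact add_mem (neg_mem hres) (phiR_mem_part φ hξ2)
      have hmθ : -((LinearMap.lTensor R φ.f x₀ - y
            - (h.extD R z₀ + h.extBr R (LinearMap.lTensor R φ.f ω) z₀))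
          - LinearMap.lTensor R φ.f ξ) ∈ h.part R (M ^ (l + 1)) i := neg_mem hθ
      have hDmθ : h.extD R (-((LinearMap.lTensor R φ.f x₀ - y
            - (h.extD R z₀ + h.extBr R (LinearMap.lTensor R φ.f ω) z₀))
          - LinearMap.lTensor R φ.f ξ)) ∈ h.part R (M ^ (l + 1 + 1)) (i + 1) := by
        rw [map_neg]
        exact neg_mem hDθ
      obtain ⟨a, hag, hDa, c, hcg, hac⟩ := qis_surj_part φ hφ hJn i hmθ hDmθ
      refine ⟨x₀ - ξ + a, ?_, z₀ + c, ?_, ?_, ?_⟩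
      · exact add_mem (sub_mem hx₀ (part_mono g hnM _ hξ)) (part_mono g hnM _ hag)
      · exact add_mem hz₀ (part_mono h hnM _ hcg)
      · have heq2 : g.extD R (x₀ - ξ + a) + g.extBr R ω (x₀ - ξ + a)
            = (((g.extD R x₀ + g.extBr R ω x₀) - g.extD R ξ) - g.extBr R ω ξ)
              + g.extBr R ω a + g.extD R a := by
          simp only [map_add, map_sub]
          abel
        rw [heq2, hDa, add_zero]
        have hbξ := extBr_small g hω hξ
        have hba := extBr_small g hω hag
        exact add_mem (sub_mem hξ2 hbξ) hba
      · have heq3 : LinearMap.lTensor R φ.f (x₀ - ξ + a) - y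
            - (h.extD R (z₀ + c) + h.extBr R (LinearMap.lTensor R φ.f ω) (z₀ + c))
            = (LinearMap.lTensor R φ.f a
                - -((LinearMap.lTensor R φ.f x₀ - y
                  - (h.extD R z₀ + h.extBr R (LinearMap.lTensor R φ.f ω) z₀))
                  - LinearMap.lTensor R φ.f ξ)
                - h.extD R c)
              - h.extBr R (LinearMap.lTensor R φ.f ω) c := by
          simp only [map_add, map_sub, map_neg]
          abel
        rw [heq3]
        have hbc := extBr_small h hχ hcg
        rw [part_deg_congr h (show (i - 1) + 1 = i by ring)] at hbc
        exact sub_mem hac hbc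
    · -- Part B
      intro i x hx hdx z hz hres
      obtain ⟨w₀, hw₀, hρ⟩ := IH.2 i x hx (part_mono g hJn _ hdx) z hz
        (part_mono h hJn _ hres)
      have hddw := dMC_dMC g hω hmc w₀
      have hDρ : g.extD R (x - (g.extD R w₀ + g.extBr R ω w₀))
          ∈ g.part R (M ^ (l + 1 + 1)) (i + 1) := by
        have heq : g.extD R (x - (g.extD R w₀ + g.extBr R ω w₀))
            = (g.extD R x + g.extBr R ω x)
              - g.extBr R ω (x - (g.extD R w₀ + g.extBr R ω w₀)) := by
          simp only [map_add, map_sub] at hddw ⊢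
          linear_combination (norm := abel) -hddw
        rw [heq]
        exact sub_mem hdx (extBr_small g hω hρ)
      have hσ : z - LinearMap.lTensor R φ.f w₀ ∈ h.part R M (i - 1) :=
        sub_mem hz (phiR_mem_part φ hw₀)
      have e5 := phiR_dMC φ ω w₀
      have hdσkey : h.extD R (z - LinearMap.lTensor R φ.f w₀)
            + h.extBr R (LinearMap.lTensor R φ.f ω) (z - LinearMap.lTensor R φ.f w₀)
          = -(LinearMap.lTensor R φ.f x
              - (h.extD R z + h.extBr R (LinearMap.lTensor R φ.f ω) z))
            + LinearMap.lTensor R φ.f (x - (g.extD R w₀ + g.extBr R ω w₀)) := by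
        simp only [map_add, map_sub] at e5 ⊢
        linear_combination (norm := abel) e5
      have hdσ : h.extD R (z - LinearMap.lTensor R φ.f w₀)
            + h.extBr R (LinearMap.lTensor R φ.f ω) (z - LinearMap.lTensor R φ.f w₀)
          ∈ h.part R (M ^ (l + 1)) ((i - 1) + 1) := by
        rw [part_deg_congr h (show (i - 1) + 1 = i by ring), hdσkey]
        exact add_mem (neg_mem (part_mono h hJn _ hres)) (phiR_mem_part φ hρ)
      obtain ⟨x₁, hx₁, z₁, hz₁, h1', h2'⟩ := IH.1 (i - 1) (z - LinearMap.lTensor R φ.f w₀)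
        hσ hdσ
      rw [part_deg_congr g (show (i - 1) + 1 = i by ring)] at h1'
      have hu1 := dMC_dMC g hω hmc x₁
      have hDu1 : g.extD R (g.extD R x₁ + g.extBr R ω x₁)
          ∈ g.part R (M ^ (l + 1 + 1)) (i + 1) := by
        have heq : g.extD R (g.extD R x₁ + g.extBr R ω x₁)
            = -(g.extBr R ω (g.extD R x₁ + g.extBr R ω x₁)) := by
          linear_combination (norm := abel) hu1
        rw [heq]
        exact neg_mem (extBr_small g hω h1')
      have huρ : (g.extD R x₁ + g.extBr R ω x₁) - (x - (g.extD R w₀ + g.extBr R ω w₀))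
          ∈ g.part R (M ^ (l + 1)) i := sub_mem h1' hρ
      have hDuρ : g.extD R ((g.extD R x₁ + g.extBr R ω x₁)
            - (x - (g.extD R w₀ + g.extBr R ω w₀)))
          ∈ g.part R (M ^ (l + 1 + 1)) (i + 1) := by
        rw [map_sub]
        exact sub_mem hDu1 hDρ
      have e1' := phiR_dMC φ ω x₁
      have e3' := dMC_dMC h hχ hmcχ z₁
      have hkey' : LinearMap.lTensor R φ.f ((g.extD R x₁ + g.extBr R ω x₁)
              - (x - (g.extD R w₀ + g.extBr R ω w₀)))
            - h.extD R (LinearMap.lTensor R φ.f x₁ - (z - LinearMap.lTensor R φ.f w₀)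
              - (h.extD R z₁ + h.extBr R (LinearMap.lTensor R φ.f ω) z₁))
          = -(LinearMap.lTensor R φ.f x
              - (h.extD R z + h.extBr R (LinearMap.lTensor R φ.f ω) z))
            + h.extBr R (LinearMap.lTensor R φ.f ω)
                (LinearMap.lTensor R φ.f x₁ - (z - LinearMap.lTensor R φ.f w₀)
                  - (h.extD R z₁ + h.extBr R (LinearMap.lTensor R φ.f ω) z₁)) := by
        simp only [map_add, map_sub] at e1' e3' e5 ⊢
        linear_combination (norm := abel) e1' + e3' + e5
      have hres' : LinearMap.lTensor R φ.f ((g.extD R x₁ + g.extBr R ω x₁)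
              - (x - (g.extD R w₀ + g.extBr R ω w₀)))
            - h.extD R (LinearMap.lTensor R φ.f x₁ - (z - LinearMap.lTensor R φ.f w₀)
              - (h.extD R z₁ + h.extBr R (LinearMap.lTensor R φ.f ω) z₁))
          ∈ h.part R (M ^ (l + 1 + 1)) i := by
        rw [hkey']
        refine add_mem (neg_mem hres) ?_
        have hbη := extBr_small h hχ h2'
        rwa [part_deg_congr h (show (i - 1) + 1 = i by ring)] at hbη
      obtain ⟨ξ₁, hξ₁, hξ₁2⟩ := qis_inj_part φ hφ hJn i huρ hDuρ h2' hres'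
      refine ⟨w₀ + x₁ - ξ₁, sub_mem (add_mem hw₀ hx₁) (part_mono g hnM _ hξ₁), ?_⟩
      have heqf : x - (g.extD R (w₀ + x₁ - ξ₁) + g.extBr R ω (w₀ + x₁ - ξ₁))
          = -(((g.extD R x₁ + g.extBr R ω x₁)
                - (x - (g.extD R w₀ + g.extBr R ω w₀))) - g.extD R ξ₁)
            + g.extBr R ω ξ₁ := by
        simp only [map_add, map_sub]
        abel
      rw [heqf]
      have hbξ₁ := extBr_small g hω hξ₁
      rw [part_deg_congr g (show (i - 1) + 1 = i by ring)] at hbξ₁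
      exact add_mem (neg_mem hξ₁2) hbξ₁

end Main

/-- for a quasi-isomorphism `φ : g → h` of DG Lie algebras and an artinian
local `K`-algebra `(R, m)` with `R/m = K`, and any `ω ∈ MC(m ⊗ g)` with
`χ := φ(ω)`, the induced map `φ : (m ⊗ g, d_ω) → (m ⊗ h, d_χ)` is a quasi-isomorphism
of complexes. -/
theorem stmt12 {K : Type} [Field K] [CharZero K] (g h : DGLA K)
    (φ : DGLA.Hom g h) (hφ : φ.IsQuasiIso)
    (R : Type) [CommRing R] [Algebra K R] [IsArtinianRing R] [IsLocalRing R]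
    (hres : Function.Bijective (algebraMap K (R ⧸ IsLocalRing.maximalIdeal R)))
    (ω : R ⊗[K] g.L) (hω : ω ∈ g.part R (IsLocalRing.maximalIdeal R) 1)
    (hmc : g.curR R ω = 0) :
    let m := IsLocalRing.maximalIdeal R
    let φR := LinearMap.lTensor R φ.f
    let χ := φR ω
    let dω : R ⊗[K] g.L → R ⊗[K] g.L := fun v => g.extD R v + g.extBr R ω v
    let dχ : R ⊗[K] h.L → R ⊗[K] h.L := fun v => h.extD R v + h.extBr R χ v
    ∀ i : ℤ,
      (∀ y ∈ h.part R m i, dχ y = 0 → ∃ x ∈ g.part R m i, dω x = 0 ∧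
        ∃ z ∈ h.part R m (i - 1), φR x - y = dχ z) ∧
      (∀ x ∈ g.part R m i, dω x = 0 → (∃ z ∈ h.part R m (i - 1), φR x = dχ z) →
        ∃ w ∈ g.part R m (i - 1), x = dω w) := by
  intro m φR χ dω dχ i
  obtain ⟨N, hN⟩ := IsArtinianRing.isNilpotent_jacobson_bot (R := R)
  rw [IsLocalRing.jacobson_eq_maximalIdeal (⊥ : Ideal R) bot_ne_top] at hN
  have hpow : m ^ (N + 1) = ⊥ := by
    have hm' : m ^ N = ⊥ := hN
    rw [pow_succ, hm']; exact Ideal.bot_mul m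
  have hmain := mainAB φ hφ hω hmc N
  constructor
  · intro y hy hdy
    have hdy' : h.extD R y + h.extBr R (LinearMap.lTensor R φ.f ω) y
        ∈ h.part R (IsLocalRing.maximalIdeal R ^ (N + 1)) (i + 1) := by
      rw [show h.extD R y + h.extBr R (LinearMap.lTensor R φ.f ω) y = 0 from hdy]
      exact zero_mem _
    obtain ⟨x, hxm, z, hzm, hdx, hfx⟩ := hmain.1 i y hy hdy'
    rw [show IsLocalRing.maximalIdeal R ^ (N + 1) = ⊥ from hpow, part_bot,
      Submodule.mem_bot] at hdx hfx
    refine ⟨x, hxm, hdx, z, hzm, ?_⟩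
    have := sub_eq_zero.mp hfx
    exact this
  · intro x hx hdx hez
    obtain ⟨z, hzm, hfz⟩ := hez
    have hdx' : g.extD R x + g.extBr R ω x
        ∈ g.part R (IsLocalRing.maximalIdeal R ^ (N + 1)) (i + 1) := by
      rw [show g.extD R x + g.extBr R ω x = 0 from hdx]
      exact zero_mem _
    have hres' : LinearMap.lTensor R φ.f x
        - (h.extD R z + h.extBr R (LinearMap.lTensor R φ.f ω) z)
        ∈ h.part R (IsLocalRing.maximalIdeal R ^ (N + 1)) i := by
      rw [show LinearMap.lTensor R φ.f x
          - (h.extD R z + h.extBr R (LinearMap.lTensor R φ.f ω) z) = 0 from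
        sub_eq_zero_of_eq hfz]
      exact zero_mem _
    obtain ⟨w, hwm, hww⟩ := hmain.2 i x hx hdx' z hzm hres'
    rw [show IsLocalRing.maximalIdeal R ^ (N + 1) = ⊥ from hpow, part_bot,
      Submodule.mem_bot] at hww
    exact ⟨w, hwm, sub_eq_zero.mp hww⟩
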